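/- Let n be a product of distinct primes with index set I, and for S, T ⊆ I define U_S as above. Then U_S · U_T ⊆ U_{S∩T}; that is, the product of an element of U_S and an element of U_T (multiplication mod n) lies in U_{S∩T}. -/

import Mathlib

open Finset in
/-- `U_S ⊆ ZMod n`: `{0}` if `S = ∅`, else `{ n_{I∖S}·x : x ∈ U_{n_S} }`. -/
def USet (m : ℕ) (p : Fin m → ℕ) (n : ℕ) (S : Finset (Fin m)) : Set (ZMod n) :=
  if S = ∅ then {0}
  else {y : ZMod n | ∃ x : (ZMod (∏ i ∈ S, p i))ˣ,
    y = ((∏ i ∈ Sᶜ, p i : ℕ) : ZMod n) * (((x : ZMod (∏ i ∈ S, p i)).val : ℕ) : ZMod n)}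

open Finset in
/-- `U_S · U_T ⊆ U_{S ∩ T}`. -/
theorem stmt_3 (m : ℕ) (p : Fin m → ℕ) (hp : ∀ i, (p i).Prime)
    (hinj : Function.Injective p) (n : ℕ) (hn : n = ∏ i, p i) :
    ∀ (S T : Finset (Fin m)) (a b : ZMod n),
      a ∈ USet m p n S → b ∈ USet m p n T → a * b ∈ USet m p n (S ∩ T) := by
  intro S T a b ha hb
  by_cases hS : S = ∅
  · subst hS
    simp only [USet, if_pos rfl, if_true, Set.mem_singleton_iff] at ha
    simp only [USet, Finset.empty_inter, if_pos rfl, if_true, Set.mem_singleton_iff, ha, zero_mul]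
  by_cases hT : T = ∅
  · subst hT
    simp only [USet, if_pos rfl, if_true, Set.mem_singleton_iff] at hb
    simp only [USet, Finset.inter_empty, if_pos rfl, if_true, Set.mem_singleton_iff, hb, mul_zero]
  simp only [USet, if_neg hS, Set.mem_setOf_eq] at ha
  simp only [USet, if_neg hT, Set.mem_setOf_eq] at hb
  obtain ⟨x, hx⟩ := ha
  obtain ⟨y, hy⟩ := hb
  set xv : ℕ := (x : ZMod (∏ i ∈ S, p i)).val with hxv
  set yv : ℕ := (y : ZMod (∏ i ∈ T, p i)).val with hyv
  -- key product identity
  have key1 : (∏ i ∈ Sᶜ, p i) * (∏ i ∈ Tᶜ, p i)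
      = (∏ i ∈ (S ∩ T)ᶜ, p i) * (∏ i ∈ (S ∪ T)ᶜ, p i) := by
    rw [Finset.compl_inter, Finset.compl_union, Finset.prod_union_inter]
  have key2 : (∏ i ∈ (S ∩ T)ᶜ, p i) * (∏ i ∈ S ∩ T, p i) = n := by
    rw [hn, mul_comm, Finset.prod_mul_prod_compl]
  by_cases hST : S ∩ T = ∅
  · -- product is 0
    have huniv : Sᶜ ∪ Tᶜ = (Finset.univ : Finset (Fin m)) := by
      rw [← Finset.compl_inter, hST, Finset.compl_empty]
    have hdvd : ((∏ i ∈ Sᶜ, p i) * (∏ i ∈ Tᶜ, p i) : ℕ) = n * ∏ i ∈ Sᶜ ∩ Tᶜ, p i := by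
      rw [← Finset.prod_union_inter, huniv, ← hn]
    simp only [USet, if_pos hST, Set.mem_singleton_iff]
    rw [hx, hy]
    have : ((∏ i ∈ Sᶜ, p i : ℕ) : ZMod n) * ((∏ i ∈ Tᶜ, p i : ℕ) : ZMod n) = 0 := by
      rw [← Nat.cast_mul, hdvd, Nat.cast_mul, ZMod.natCast_self, zero_mul]
    calc ((∏ i ∈ Sᶜ, p i : ℕ) : ZMod n) * (xv : ZMod n) * (((∏ i ∈ Tᶜ, p i : ℕ) : ZMod n) * (yv : ZMod n))
        = ((∏ i ∈ Sᶜ, p i : ℕ) : ZMod n) * ((∏ i ∈ Tᶜ, p i : ℕ) : ZMod n) * ((xv : ZMod n) * (yv : ZMod n)) := by ring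
      _ = 0 := by rw [this, zero_mul]
  · -- main case
    set c : ℕ := ∏ i ∈ (S ∩ T)ᶜ, p i with hc
    set d : ℕ := ∏ i ∈ S ∩ T, p i with hd
    set e : ℕ := ∏ i ∈ (S ∪ T)ᶜ, p i with he
    have hdpos : 0 < d := Finset.prod_pos fun i _ => (hp i).pos
    haveI : NeZero d := ⟨hdpos.ne'⟩
    set w : ℕ := e * xv * yv with hw
    have hcope : Nat.Coprime e d := by
      apply Nat.Coprime.prod_left
      intro i hi
      apply Nat.Coprime.prod_right
      intro j hj
      have hij : i ≠ j := by
        intro h; subst h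
        simp only [Finset.mem_compl, Finset.mem_union, Finset.mem_inter] at hi hj
        exact hi (Or.inl hj.1)
      exact (Nat.coprime_primes (hp i) (hp j)).mpr (fun h => hij (hinj h))
    have hcopx : Nat.Coprime xv d :=
      Nat.Coprime.coprime_dvd_right
        (Finset.prod_dvd_prod_of_subset _ _ _ (Finset.inter_subset_left))
        (ZMod.val_coe_unit_coprime x)
    have hcopy : Nat.Coprime yv d :=
      Nat.Coprime.coprime_dvd_right
        (Finset.prod_dvd_prod_of_subset _ _ _ (Finset.inter_subset_right))
        (ZMod.val_coe_unit_coprime y)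
    have hcop : Nat.Coprime w d := Nat.Coprime.mul (Nat.Coprime.mul hcope hcopx) hcopy
    simp only [USet, if_neg hST, Set.mem_setOf_eq]
    refine ⟨ZMod.unitOfCoprime w hcop, ?_⟩
    have hval : ((ZMod.unitOfCoprime w hcop : ZMod d)).val = w % d := by
      rw [ZMod.coe_unitOfCoprime, ZMod.val_natCast]
    rw [hx, hy, hval]
    have hmod : (c * (w % d)) ≡ c * w [MOD n] := by
      rw [← key2]
      exact Nat.ModEq.mul_left' c (Nat.mod_modEq w d)
    have hnat : (∏ i ∈ Sᶜ, p i) * xv * ((∏ i ∈ Tᶜ, p i) * yv) = c * w := by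
      have h1 : c * w = (c * e) * (xv * yv) := by rw [hw]; ring
      rw [h1, ← key1]; ring
    calc ((∏ i ∈ Sᶜ, p i : ℕ) : ZMod n) * (xv : ZMod n) * (((∏ i ∈ Tᶜ, p i : ℕ) : ZMod n) * (yv : ZMod n))
        = (((∏ i ∈ Sᶜ, p i) * xv * ((∏ i ∈ Tᶜ, p i) * yv) : ℕ) : ZMod n) := by push_cast; ring
      _ = ((c * w : ℕ) : ZMod n) := by rw [hnat]
      _ = ((c * (w % d) : ℕ) : ZMod n) := ((ZMod.natCast_eq_natCast_iff _ _ _).mpr hmod).symm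
      _ = (c : ZMod n) * ((w % d : ℕ) : ZMod n) := by push_cast; ring
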